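/- Let p be an odd prime, K = ℚ(√p), and set δ = 1 if p ≡ 1 (mod 4) and δ = 2 if p ≡ 3 (mod 4). Let ε = (δ/2)(t + u√p) be the fundamental unit of K, where t, u are positive integers, and let 𝔭 be the unique prime ideal of O_K above p (so 𝔭² = pO_K). Then p divides u if and only if ε^(p−1) ≡ 1 (mod 𝔭²). In particular, the Ankeny–Artin–Chowla conjecture (for p ≡ 1 mod 4) and Mordell's conjecture (for p ≡ 3 mod 4) fail at p exactly when 𝔭 is a base-ε Wieferich prime. -/

import Mathlib

open NumberField Polynomial

set_option maxHeartbeats 1000000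

theorem aux_cancel_AAC {R : Type*} [CommRing R] [IsDomain R] [IsDedekindDomain R]
    (𝔭 : Ideal R) (hP : 𝔭.IsPrime) (hbot : 𝔭 ≠ ⊥) {c x : R} (hc : c ∉ 𝔭)
    (h : c * x ∈ 𝔭 ^ 2) : x ∈ 𝔭 ^ 2 := by
  have hpr : Prime 𝔭 := Ideal.prime_of_isPrime hbot hP
  have h1 : 𝔭 ^ 2 ∣ Ideal.span {c} * Ideal.span {x} := by
    rw [Ideal.span_singleton_mul_span_singleton, Ideal.dvd_iff_le,
      Ideal.span_singleton_le_iff_mem]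
    exact h
  have h2 : ¬ 𝔭 ∣ Ideal.span {c} := by
    rw [Ideal.dvd_iff_le, Ideal.span_singleton_le_iff_mem]
    exact hc
  have h3 := hpr.pow_dvd_of_dvd_mul_left 2 h2 h1
  rwa [Ideal.dvd_iff_le, Ideal.span_singleton_le_iff_mem] at h3

theorem aux_natmem_AAC {R : Type*} [CommRing R] (𝔭 : Ideal R) (h𝔭 : 𝔭.IsPrime)
    {p : ℕ} (hp : p.Prime) (hmem : (p : R) ∈ 𝔭) (n : ℕ) : (n : R) ∈ 𝔭 ↔ p ∣ n := by
  have hIp : (p : ℤ) ∈ Ideal.comap (Int.castRingHom R) 𝔭 := by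
    simpa [Ideal.mem_comap] using hmem
  have hImax : Ideal.span {(p : ℤ)} = Ideal.comap (Int.castRingHom R) 𝔭 := by
    refine (PrincipalIdealRing.isMaximal_of_irreducible
      (Nat.prime_iff_prime_int.mp hp).irreducible).eq_of_le ?_ ?_
    · intro h
      have h1 : (1 : ℤ) ∈ Ideal.comap (Int.castRingHom R) 𝔭 := h ▸ Submodule.mem_top
      have : (1 : R) ∈ 𝔭 := by simpa [Ideal.mem_comap] using h1
      exact h𝔭.ne_top ((Ideal.eq_top_iff_one _).mpr this)
    · exact (Ideal.span_singleton_le_iff_mem _).mpr hIp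
  have key : (n : R) ∈ 𝔭 ↔ (n : ℤ) ∈ Ideal.comap (Int.castRingHom R) 𝔭 := by
    simp [Ideal.mem_comap]
  rw [key, ← hImax, Ideal.mem_span_singleton, Int.natCast_dvd_natCast]

/-- **Theorem (Ankeny--Artin--Chowla/Mordell and Wieferich primes).**
Let `p` be an odd prime, `K = ℚ(√p)` (generated over `ℚ` by `sqrtp` with `sqrtp² = p`),
`δ = 1` if `p ≡ 1 (mod 4)` and `δ = 2` if `p ≡ 3 (mod 4)`, and let
`ε = (δ/2)(t + u√p)` be the fundamental unit of `K`.  Then `p ∣ u` iff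
`ε^(p-1) ≡ 1 (mod 𝔭²)` for the prime `𝔭` above `p`; equivalently (since `N(𝔭) = p`),
iff `𝔭` is a base-`ε` Wieferich prime, i.e. `ε^(N(𝔭)-1) ≡ 1 (mod 𝔭²)`. -/
theorem AAC_Mordell_iff_wieferich
    {K : Type*} [Field K] [NumberField K]
    (p : ℕ) (hp : p.Prime) (hodd : Odd p)
    (sqrtp : K) (hsqrtp : sqrtp ^ 2 = (p : K))
    (hK : Algebra.adjoin ℚ {sqrtp} = ⊤)
    (σ : K →+* ℝ) (hσ : 0 < σ sqrtp)
    (δ : ℕ) (hδ1 : p % 4 = 1 → δ = 1) (hδ2 : p % 4 = 3 → δ = 2)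
    (ε : (𝓞 K)ˣ) (t u : ℕ) (ht : 0 < t) (hu : 0 < u)
    (hε : ((ε : 𝓞 K) : K) = (δ : K) / 2 * ((t : K) + (u : K) * sqrtp))
    (hεpos : 1 < σ (ε : 𝓞 K))
    (hfund : ∀ η : (𝓞 K)ˣ, ∃ k : ℤ, η = ε ^ k ∨ η = -ε ^ k) :
    (p ∣ u ↔
      ∀ 𝔭 : Ideal (𝓞 K), 𝔭.IsPrime → (p : 𝓞 K) ∈ 𝔭 →
        (ε : 𝓞 K) ^ (p - 1) - 1 ∈ 𝔭 ^ 2) ∧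
    (p ∣ u ↔
      ∀ 𝔭 : Ideal (𝓞 K), 𝔭.IsPrime → (p : 𝓞 K) ∈ 𝔭 →
        (ε : 𝓞 K) ^ (Ideal.absNorm 𝔭 - 1) - 1 ∈ 𝔭 ^ 2) := by
  haveI := Fact.mk hp
  have hp2 : p ≠ 2 := by
    intro h
    rw [h] at hodd
    exact (by norm_num : ¬ Odd 2) hodd
  have hp3 : 3 ≤ p := by have := hp.two_le; omega
  have hδ12 : δ = 1 ∨ δ = 2 := by
    have h2 := Nat.odd_iff.mp hodd
    have h4 : p % 4 = 1 ∨ p % 4 = 3 := by omega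
    rcases h4 with h | h
    · exact Or.inl (hδ1 h)
    · exact Or.inr (hδ2 h)
  have hpδ : ¬ p ∣ δ := by
    rcases hδ12 with h | h <;>
      (rw [h]; intro hd; have := Nat.le_of_dvd (by norm_num) hd; omega)
  -- the square root of p as an algebraic integer
  have hsint : IsIntegral ℤ sqrtp := by
    refine ⟨X ^ 2 - C (p : ℤ), monic_X_pow_sub_C _ (by norm_num), ?_⟩
    simp [hsqrtp]
  set s : 𝓞 K := ⟨sqrtp, hsint⟩ with hs_def
  have hsK : (s : K) = sqrtp := rfl
  have hs2 : s ^ 2 = ((p : ℕ) : 𝓞 K) := by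
    ext
    push_cast [hsK]
    exact hsqrtp
  set E : 𝓞 K := (ε : 𝓞 K) with hE_def
  set a : ℕ := δ * t with ha_def
  set b : ℕ := δ * u with hb_def
  have h2E : 2 * E = (a : 𝓞 K) + (b : 𝓞 K) * s := by
    have h2 : ((2 : 𝓞 K) : K) = 2 := map_ofNat (algebraMap (𝓞 K) K) 2
    ext
    push_cast [hsK, hε, h2, ha_def, hb_def]
    ring
  -- Fermat's little theorem data
  obtain ⟨e, he⟩ : ∃ e : ℤ, ((a : ℤ)) ^ p = (a : ℤ) + p * e := by
    have h : (((a : ℤ) ^ p - a : ℤ) : ZMod p) = 0 := by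
      push_cast
      rw [ZMod.pow_card]
      ring
    obtain ⟨e, he⟩ := (ZMod.intCast_zmod_eq_zero_iff_dvd _ p).mp h
    exact ⟨e, by linarith⟩
  obtain ⟨f, hf⟩ : ∃ f : ℤ, (2 : ℤ) ^ (p + 1) = 4 + p * f := by
    have h : (((2 : ℤ) ^ (p + 1) - 4 : ℤ) : ZMod p) = 0 := by
      push_cast
      rw [pow_succ, ZMod.pow_card]
      ring
    obtain ⟨f, hf⟩ := (ZMod.intCast_zmod_eq_zero_iff_dvd _ p).mp h
    exact ⟨f, by linarith⟩
  have heO : ((a : ℕ) : 𝓞 K) ^ p = (a : 𝓞 K) + (p : 𝓞 K) * ((e : ℤ) : 𝓞 K) := by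
    have := congrArg (fun z : ℤ => ((z : 𝓞 K))) he
    push_cast at this
    exact_mod_cast this
  have hfO : (2 : 𝓞 K) ^ (p + 1) = 4 + (p : 𝓞 K) * ((f : ℤ) : 𝓞 K) := by
    have := congrArg (Int.cast : ℤ → 𝓞 K) hf
    simp only [Int.cast_pow, Int.cast_add, Int.cast_mul, Int.cast_natCast, Int.cast_ofNat] at this
    exact this
  -- binomial expansion of (2ε)^p
  obtain ⟨r, hr⟩ := exists_add_pow_prime_eq hp ((a : ℕ) : 𝓞 K) (((b : ℕ) : 𝓞 K) * s)
  obtain ⟨c, hc⟩ : ∃ c, (((b : ℕ) : 𝓞 K) * s) ^ p = (p : 𝓞 K) * c := by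
    obtain ⟨k, hk⟩ := hodd
    have hk1 : 1 ≤ k := by omega
    have h1 : s ^ p = ((p : ℕ) : 𝓞 K) ^ k * s := by
      conv_lhs => rw [hk]
      rw [pow_succ, pow_mul, hs2]
    have h2 : ((p : ℕ) : 𝓞 K) ^ k = (p : 𝓞 K) * ((p : ℕ) : 𝓞 K) ^ (k - 1) := by
      conv_lhs => rw [show k = 1 + (k - 1) by omega]
      rw [pow_add, pow_one]
    refine ⟨(b : 𝓞 K) ^ p * (((p : ℕ) : 𝓞 K) ^ (k - 1) * s), ?_⟩
    rw [mul_pow, h1, h2]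
    ring
  obtain ⟨g, hgE⟩ : ∃ g, (2 * E) ^ p = (a : 𝓞 K) + (p : 𝓞 K) * g := by
    refine ⟨((e : ℤ) : 𝓞 K) + c + (a : 𝓞 K) * ((b : 𝓞 K) * s) * r, ?_⟩
    rw [h2E, hr, hc, heO]
    ring
  have hEp : E ^ (p - 1) * E = E ^ p := by
    rw [← pow_succ]
    congr 1
    omega
  -- the key algebraic identity
  have hm : 4 * (E * ((a : 𝓞 K) - E)) + (b : 𝓞 K) ^ 2 * (p : 𝓞 K) = (a : 𝓞 K) ^ 2 := by
    linear_combination (-(2 * E - (a : 𝓞 K) + (b : 𝓞 K) * s)) * h2E - (b : 𝓞 K) ^ 2 * hs2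
  have key1 : (2 : 𝓞 K) ^ (p + 1) * E ^ (p - 1) * (E * ((a : 𝓞 K) - E)) =
      ((a : 𝓞 K) + (p : 𝓞 K) * g) * ((a : 𝓞 K) - (b : 𝓞 K) * s) := by
    calc (2 : 𝓞 K) ^ (p + 1) * E ^ (p - 1) * (E * ((a : 𝓞 K) - E))
        = (2 : 𝓞 K) ^ p * (E ^ (p - 1) * E) * (2 * ((a : 𝓞 K) - E)) := by ring
      _ = (2 : 𝓞 K) ^ p * E ^ p * (2 * ((a : 𝓞 K) - E)) := by rw [hEp]
      _ = (2 * E) ^ p * (2 * ((a : 𝓞 K) - E)) := by rw [mul_pow]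
      _ = ((a : 𝓞 K) + (p : 𝓞 K) * g) * (2 * ((a : 𝓞 K) - E)) := by rw [hgE]
      _ = ((a : 𝓞 K) + (p : 𝓞 K) * g) * ((a : 𝓞 K) - (b : 𝓞 K) * s) := by
          linear_combination (-((a : 𝓞 K) + (p : 𝓞 K) * g)) * h2E
  obtain ⟨w, hw⟩ : ∃ w, (2 : 𝓞 K) ^ (p + 1) * (E * ((a : 𝓞 K) - E)) * (E ^ (p - 1) - 1) +
      (a : 𝓞 K) * (b : 𝓞 K) * s = (p : 𝓞 K) * w := by
    refine ⟨(b : 𝓞 K) ^ 2 + g * ((a : 𝓞 K) - (b : 𝓞 K) * s) -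
      ((f : ℤ) : 𝓞 K) * (E * ((a : 𝓞 K) - E)), ?_⟩
    linear_combination key1 - hm - (E * ((a : 𝓞 K) - E)) * hfO
  -- generic facts about primes 𝔭 containing p
  have hbot : ∀ 𝔭 : Ideal (𝓞 K), (p : 𝓞 K) ∈ 𝔭 → 𝔭 ≠ ⊥ := by
    intro 𝔭 hpm h
    rw [h, Ideal.mem_bot] at hpm
    exact (Nat.cast_ne_zero.mpr hp.ne_zero) hpm
  have h2nm : ∀ 𝔭 : Ideal (𝓞 K), 𝔭.IsPrime → (p : 𝓞 K) ∈ 𝔭 → (2 : 𝓞 K) ∉ 𝔭 := by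
    intro 𝔭 hP hpm h2
    have h2' : ((2 : ℕ) : 𝓞 K) ∈ 𝔭 := by exact_mod_cast h2
    have := (aux_natmem_AAC 𝔭 hP hp hpm 2).mp h2'
    have := Nat.le_of_dvd (by norm_num) this
    omega
  have hsmem : ∀ 𝔭 : Ideal (𝓞 K), 𝔭.IsPrime → (p : 𝓞 K) ∈ 𝔭 → s ∈ 𝔭 := by
    intro 𝔭 hP hpm
    have : s * s ∈ 𝔭 := by
      have : s * s = ((p : ℕ) : 𝓞 K) := by rw [← hs2]; ring
      rw [this]
      exact_mod_cast hpm
    rcases hP.mem_or_mem this with h | h <;> exact h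
  have hp2mem : ∀ 𝔭 : Ideal (𝓞 K), 𝔭.IsPrime → (p : 𝓞 K) ∈ 𝔭 → (p : 𝓞 K) ∈ 𝔭 ^ 2 := by
    intro 𝔭 hP hpm
    have h1 : s ^ 2 ∈ 𝔭 ^ 2 := Ideal.pow_mem_pow (hsmem 𝔭 hP hpm) 2
    rw [hs2] at h1
    exact_mod_cast h1
  have hEnm : ∀ 𝔭 : Ideal (𝓞 K), 𝔭.IsPrime → E ∉ 𝔭 := by
    intro 𝔭 hP hE
    have h1 : ((ε⁻¹ : (𝓞 K)ˣ) : 𝓞 K) * E = 1 := by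
      rw [hE_def]
      exact_mod_cast Units.inv_mul ε
    have : (1 : 𝓞 K) ∈ 𝔭 := h1 ▸ Ideal.mul_mem_left 𝔭 _ hE
    exact hP.ne_top ((Ideal.eq_top_iff_one _).mpr this)
  have hanm : ∀ 𝔭 : Ideal (𝓞 K), 𝔭.IsPrime → (p : 𝓞 K) ∈ 𝔭 → ((a : ℕ) : 𝓞 K) ∉ 𝔭 := by
    intro 𝔭 hP hpm ha
    have h2E' : 2 * E ∈ 𝔭 := by
      rw [h2E]
      exact Ideal.add_mem _ ha (Ideal.mul_mem_left _ _ (hsmem 𝔭 hP hpm))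
    rcases hP.mem_or_mem h2E' with h | h
    · exact h2nm 𝔭 hP hpm h
    · exact hEnm 𝔭 hP h
  have hMnm : ∀ 𝔭 : Ideal (𝓞 K), 𝔭.IsPrime → (p : 𝓞 K) ∈ 𝔭 →
      E * ((a : 𝓞 K) - E) ∉ 𝔭 := by
    intro 𝔭 hP hpm hM
    have ha2 : ((a : ℕ) : 𝓞 K) ^ 2 ∈ 𝔭 := by
      rw [← hm]
      exact Ideal.add_mem _ (Ideal.mul_mem_left _ _ hM)
        (Ideal.mul_mem_left _ _ hpm)
    exact hanm 𝔭 hP hpm (hP.mem_of_pow_mem _ ha2)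
  -- the absolute norm of p O_K is p²
  have hfr : Module.finrank ℚ K = 2 := by
    have hintQ : IsIntegral ℚ sqrtp := by
      refine ⟨X ^ 2 - C (p : ℚ), monic_X_pow_sub_C _ (by norm_num), ?_⟩
      simp [hsqrtp]
    have hnr : sqrtp ∉ (algebraMap ℚ K).range := by
      rintro ⟨rq, hrq⟩
      have hr2 : (rq : K) ^ 2 = (p : K) := by
        rw [show (rq : K) = sqrtp from by exact_mod_cast hrq, hsqrtp]
      have hrq2 : (rq ^ 2 : ℚ) = (p : ℚ) := by
        have := hr2
        push_cast at this ⊢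
        exact_mod_cast this
      apply hp.irrational_sqrt
      refine ⟨|rq|, ?_⟩
      have hrr : ((rq : ℝ)) ^ 2 = (p : ℝ) := by
        exact_mod_cast congrArg (fun q : ℚ => (q : ℝ)) hrq2
      rw [← hrr, Real.sqrt_sq_eq_abs]
      push_cast
      ring
    have hdvd : minpoly ℚ sqrtp ∣ X ^ 2 - C (p : ℚ) := by
      apply minpoly.dvd
      simp [hsqrtp]
    have hdeg2 : (X ^ 2 - C (p : ℚ)).natDegree = 2 := natDegree_X_pow_sub_C
    have hne : (X ^ 2 - C (p : ℚ)) ≠ 0 := by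
      intro h
      rw [h] at hdeg2
      simp at hdeg2
    have hle : (minpoly ℚ sqrtp).natDegree ≤ 2 := by
      have := Polynomial.natDegree_le_of_dvd hdvd hne
      omega
    have hpos : 0 < (minpoly ℚ sqrtp).natDegree := minpoly.natDegree_pos hintQ
    have hne1 : (minpoly ℚ sqrtp).natDegree ≠ 1 := by
      intro h
      exact hnr ((minpoly.natDegree_eq_one_iff).mp h)
    have hdeg : (minpoly ℚ sqrtp).natDegree = 2 := by omega
    have h1 : Module.finrank ℚ (Algebra.adjoin ℚ ({sqrtp} : Set K)) = 2 := by
      rw [PowerBasis.finrank (Algebra.adjoin.powerBasis hintQ),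
        Algebra.adjoin.powerBasis_dim, hdeg]
    have h2 : Module.finrank ℚ ((⊤ : Subalgebra ℚ K)) = Module.finrank ℚ K :=
      (Subalgebra.topEquiv.toLinearEquiv).finrank_eq
    rw [← h2, ← hK, h1]
  have habsP : Ideal.absNorm (Ideal.span {((p : ℕ) : 𝓞 K)}) = p ^ 2 := by
    rw [Ideal.absNorm_span_singleton]
    have h1 : (Algebra.norm ℤ ((p : ℕ) : 𝓞 K) : ℚ) = Algebra.norm ℚ (((p : ℕ) : 𝓞 K) : K) :=
      Algebra.coe_norm_int _
    have h2 : (((p : ℕ) : 𝓞 K) : K) = algebraMap ℚ K ((p : ℕ) : ℚ) := by push_cast; simp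
    rw [h2, Algebra.norm_algebraMap, hfr] at h1
    have h3 : Algebra.norm ℤ ((p : ℕ) : 𝓞 K) = (p : ℤ) ^ 2 := by exact_mod_cast h1
    rw [h3]
    simp [Int.natAbs_pow]
  -- absNorm of a prime above p is p
  have habsNorm : ∀ 𝔭 : Ideal (𝓞 K), 𝔭.IsPrime → (p : 𝓞 K) ∈ 𝔭 → Ideal.absNorm 𝔭 = p := by
    intro 𝔭 hP hpm
    have hk1 : Ideal.absNorm 𝔭 ≠ 1 := fun h => hP.ne_top (Ideal.absNorm_eq_one_iff.mp h)
    have hdv : Ideal.absNorm 𝔭 ∣ p ^ 2 := by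
      have := Ideal.absNorm_dvd_absNorm_of_le
        ((Ideal.span_singleton_le_iff_mem _).mpr hpm)
      rwa [habsP] at this
    have hdv2 : Ideal.absNorm 𝔭 ^ 2 ∣ p ^ 2 := by
      have hle2 : Ideal.span {((p : ℕ) : 𝓞 K)} ≤ 𝔭 ^ 2 :=
        (Ideal.span_singleton_le_iff_mem _).mpr (hp2mem 𝔭 hP hpm)
      have := Ideal.absNorm_dvd_absNorm_of_le hle2
      rwa [habsP, map_pow] at this
    obtain ⟨i, hi, hki⟩ := (Nat.dvd_prime_pow hp).mp hdv
    have hi' : i = 0 ∨ i = 1 ∨ i = 2 := by omega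
    rcases hi' with rfl | rfl | rfl
    · rw [pow_zero] at hki; exact absurd hki hk1
    · simpa using hki
    · exfalso
      rw [hki, ← pow_mul] at hdv2
      have := Nat.le_of_dvd (by positivity) hdv2
      have h2 := hp.two_le
      have : p ^ 4 ≤ p ^ 2 := by simpa using this
      have h4 : p ^ 2 < p ^ 4 := Nat.pow_lt_pow_right (by omega) (by omega)
      omega
  -- the first equivalence
  have main : p ∣ u ↔
      ∀ 𝔭 : Ideal (𝓞 K), 𝔭.IsPrime → (p : 𝓞 K) ∈ 𝔭 →
        (ε : 𝓞 K) ^ (p - 1) - 1 ∈ 𝔭 ^ 2 := by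
    constructor
    · intro hpu 𝔭 hP hpm
      obtain ⟨u', hu'⟩ := hpu
      have hb : ((b : ℕ) : 𝓞 K) = (p : 𝓞 K) * ((δ * u' : ℕ) : 𝓞 K) := by
        rw [hb_def, hu']
        push_cast
        ring
      have heq : (2 : 𝓞 K) ^ (p + 1) * (E * ((a : 𝓞 K) - E)) * (E ^ (p - 1) - 1) =
          (p : 𝓞 K) * (w - (a : 𝓞 K) * ((δ * u' : ℕ) : 𝓞 K) * s) := by
        linear_combination hw - ((a : 𝓞 K) * s) * hb
      have hcx : (2 : 𝓞 K) ^ (p + 1) * (E * ((a : 𝓞 K) - E)) * (E ^ (p - 1) - 1) ∈ 𝔭 ^ 2 := by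
        rw [heq]
        exact Ideal.mul_mem_right _ _ (hp2mem 𝔭 hP hpm)
      have hc0 : (2 : 𝓞 K) ^ (p + 1) * (E * ((a : 𝓞 K) - E)) ∉ 𝔭 := by
        intro h
        rcases hP.mem_or_mem h with h | h
        · exact h2nm 𝔭 hP hpm (hP.mem_of_pow_mem _ h)
        · exact hMnm 𝔭 hP hpm h
      exact aux_cancel_AAC 𝔭 hP (hbot 𝔭 hpm) hc0 hcx
    · intro H
      by_contra hpu
      have hne : Ideal.span {((p : ℕ) : 𝓞 K)} ≠ ⊤ := by
        intro h
        rw [h, Ideal.absNorm_top] at habsP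
        have := hp.two_le
        nlinarith
      obtain ⟨𝔭, hmax, hle⟩ := Ideal.exists_le_maximal _ hne
      have hP := hmax.isPrime
      have hpm : (p : 𝓞 K) ∈ 𝔭 := hle (Ideal.subset_span (Set.mem_singleton _))
      have hx := H 𝔭 hP hpm
      have habsmem : (a : 𝓞 K) * (b : 𝓞 K) * s ∈ 𝔭 ^ 2 := by
        have heq : (a : 𝓞 K) * (b : 𝓞 K) * s = (p : 𝓞 K) * w -
            (2 : 𝓞 K) ^ (p + 1) * (E * ((a : 𝓞 K) - E)) * (E ^ (p - 1) - 1) := by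
          linear_combination hw
        rw [heq]
        exact Ideal.sub_mem _ (Ideal.mul_mem_right _ _ (hp2mem 𝔭 hP hpm))
          (Ideal.mul_mem_left _ _ hx)
      have hab : (a : 𝓞 K) * (b : 𝓞 K) ∉ 𝔭 := by
        intro h
        rcases hP.mem_or_mem h with h | h
        · exact hanm 𝔭 hP hpm h
        · have := (aux_natmem_AAC 𝔭 hP hp hpm b).mp h
          rcases (Nat.Prime.dvd_mul hp).mp this with h' | h'
          · exact hpδ h'
          · exact hpu h'
      have hs2mem : s ∈ 𝔭 ^ 2 := aux_cancel_AAC 𝔭 hP (hbot 𝔭 hpm) hab habsmem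
      have hple : Ideal.span {((p : ℕ) : 𝓞 K)} ≤ 𝔭 ^ 4 := by
        rw [Ideal.span_singleton_le_iff_mem]
        have h1 : s ^ 2 ∈ (𝔭 ^ 2) ^ 2 := Ideal.pow_mem_pow hs2mem 2
        rw [hs2, ← pow_mul] at h1
        exact_mod_cast h1
      have hdvd4 : Ideal.absNorm 𝔭 ^ 4 ∣ p ^ 2 := by
        have := Ideal.absNorm_dvd_absNorm_of_le hple
        rwa [habsP, map_pow] at this
      rw [habsNorm 𝔭 hP hpm] at hdvd4
      have := Nat.le_of_dvd (by positivity) hdvd4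
      have h2 := hp.two_le
      have h4 : p ^ 2 < p ^ 4 := Nat.pow_lt_pow_right (by omega) (by omega)
      omega
  refine ⟨main, ?_⟩
  constructor
  · intro hpu 𝔭 hP hpm
    rw [habsNorm 𝔭 hP hpm]
    exact main.mp hpu 𝔭 hP hpm
  · intro H
    apply main.mpr
    intro 𝔭 hP hpm
    have := H 𝔭 hP hpm
    rwa [habsNorm 𝔭 hP hpm] at this
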